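/- arXiv:2410.14097 — 6 statements merged into one kernel-verified Lean document; each statement's English description precedes it below -/
import Mathlib

section
/- Let R be a ring and F : ModuleCat R ⥤ Ab an additive functor that is half-exact. Let B be an R-module with injective resolution 0 → B → I⁰ → I¹ → I² → ⋯, and for j ≥ 1 let Σʲ B denote the j-th cosyzygy (Σ⁰B = B, ΣʲB = coker(Σʲ⁻¹B ↪ Iʲ⁻¹)), so there are canonical monomorphisms ΣʲB ↪ Iʲ and epimorphisms Iʲ⁻¹ ↠ ΣʲB. Then the long sequence of abelian groups 0 → ker(F(B) → F(I⁰)) → F(B) → H⁰(F(I^•)) → ker(F(ΣB) → F(I¹)) → coker(F(I⁰) → F(ΣB)) → H¹(F(I^•)) → ker(F(Σ²B) → F(I²)) → coker(F(I¹) → F(Σ²B)) → H²(F(I^•)) → ⋯, in which Hʲ(F(I^•)) denotes the cohomology of the cochain complex F(I⁰) → F(I¹) → ⋯ at F(Iʲ), the maps into and out of the ker- and coker-terms are the canonically induced ones (kernel inclusions, maps induced by F applied to the structural monos and epis of the resolution, and the maps induced by the universal properties of kernel, cokernel and (co)homology), is exact. -/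
open CategoryTheory Limits

set_option linter.unusedSectionVars false

namespace RightFundamentalSeq

universe u v w

/-- The data of an injective resolution `0 → B → I⁰ → I¹ → ⋯` of the module `B = S 0`
together with its cosyzygies `S j = Σʲ B`, encoded by composable pairs
`Σʲ B →(m j) Iʲ →(e j) Σʲ⁺¹ B` with `m j ≫ e j = 0` (exactness is a separate hypothesis:
each such pair is required to be a short exact sequence in the main theorem). -/
structure CosyzygyData (R : Type u) [Ring R] where
  /-- the cosyzygy modules, `S 0` being the given module `B` -/
  S : ℕ → ModuleCat.{v} R
  /-- the modules of the injective resolution -/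
  I : ℕ → ModuleCat.{v} R
  /-- the canonical monomorphisms `Σʲ B ↪ Iʲ` -/
  m : ∀ j, S j ⟶ I j
  /-- the canonical epimorphisms `Iʲ ↠ Σʲ⁺¹ B` -/
  e : ∀ j, I j ⟶ S (j + 1)
  wme : ∀ j, m j ≫ e j = 0

variable {R : Type u} [Ring R]
variable (F : ModuleCat.{v} R ⥤ AddCommGrpCat.{w}) [F.Additive] (D : CosyzygyData.{u, v} R)

namespace CosyzygyData

/-- The differential `Iʲ ⟶ Iʲ⁺¹` of the injective resolution. -/
def d (j : ℕ) : D.I j ⟶ D.I (j + 1) := D.e j ≫ D.m (j + 1)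

lemma d_comp_d (j : ℕ) : D.d j ≫ D.d (j + 1) = 0 := by
  show (D.e j ≫ D.m (j + 1)) ≫ D.e (j + 1) ≫ D.m (j + 2) = 0
  rw [Category.assoc, reassoc_of% (D.wme (j + 1)), zero_comp, comp_zero]

end CosyzygyData

/-- `K j = ker (F(Σʲ B) → F(Iʲ))`, the value of the sub-stabilization of `F` at `Σʲ B`. -/
noncomputable def K (j : ℕ) : AddCommGrpCat.{w} := kernel (F.map (D.m j))

/-- `Cok j = coker (F(Iʲ) → F(Σʲ⁺¹ B))`. -/
noncomputable def Cok (j : ℕ) : AddCommGrpCat.{w} := cokernel (F.map (D.e j))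

/-- The `j`-cocycles `Z j = ker (F(Iʲ) → F(Iʲ⁺¹))` of the complex `F(I^•)`. -/
noncomputable def Z (j : ℕ) : AddCommGrpCat.{w} := kernel (F.map (D.d j))

/-- The canonical map `F(Σʲ B) ⟶ Z j` induced by `F(m j)`. -/
noncomputable def s (j : ℕ) : F.obj (D.S j) ⟶ Z F D j :=
  kernel.lift _ (F.map (D.m j)) (by
    rw [← F.map_comp]
    show F.map (D.m j ≫ D.e j ≫ D.m (j + 1)) = 0
    rw [reassoc_of% (D.wme j), zero_comp, F.map_zero])

/-- The lift `ℓ j : F(Iʲ) ⟶ Z (j+1)` of the differential `F(dⱼ)`. -/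
noncomputable def l (j : ℕ) : F.obj (D.I j) ⟶ Z F D (j + 1) :=
  kernel.lift _ (F.map (D.d j)) (by
    rw [← F.map_comp, D.d_comp_d, F.map_zero])

/-- The cohomology `Hʲ(F(I^•))` of the cochain complex `F(I⁰) → F(I¹) → ⋯` at `F(Iʲ)`:
`H 0` is the kernel of `F(I⁰) → F(I¹)` and `H (j+1) = Z (j+1) / im F(Iʲ)`. -/
noncomputable def H : ℕ → AddCommGrpCat.{w}
  | 0 => Z F D 0
  | (j + 1) => cokernel (l F D j)

/-- The kernel inclusion `K 0 = ker(F(B) → F(I⁰)) ⟶ F(B)`. -/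
noncomputable def ι0 : K F D 0 ⟶ F.obj (D.S 0) := kernel.ι (F.map (D.m 0))

/-- The canonical map `F(B) ⟶ H⁰(F(I^•))` induced by `F(m 0)`. -/
noncomputable def r0 : F.obj (D.S 0) ⟶ H F D 0 := s F D 0

/-- The canonical map `Z j ⟶ K (j+1) = ker(F(Σʲ⁺¹B) → F(Iʲ⁺¹))` induced by `F(e j)`. -/
noncomputable def toK (j : ℕ) : Z F D j ⟶ K F D (j + 1) :=
  kernel.lift _ (kernel.ι (F.map (D.d j)) ≫ F.map (D.e j)) (by
    erw [Category.assoc, ← F.map_comp]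
    exact kernel.condition _)

/-- The connecting map `Hʲ(F(I^•)) ⟶ ker(F(Σʲ⁺¹B) → F(Iʲ⁺¹))`, induced by the universal
properties of kernels and cokernels. -/
noncomputable def conn : ∀ j, H F D j ⟶ K F D (j + 1)
  | 0 => toK F D 0
  | (j + 1) => cokernel.desc (l F D j) (toK F D (j + 1)) (by
      apply (cancel_mono (kernel.ι (F.map (D.m (j + 2))))).1
      erw [Category.assoc, zero_comp]
      show l F D j ≫ toK F D (j + 1) ≫ kernel.ι _ = 0
      erw [toK, kernel.lift_ι, l, ← Category.assoc, kernel.lift_ι, ← F.map_comp]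
      show F.map ((D.e j ≫ D.m (j + 1)) ≫ D.e (j + 1)) = 0
      erw [Category.assoc, D.wme (j + 1), comp_zero, F.map_zero])

/-- The canonical map `ker(F(Σʲ⁺¹B) → F(Iʲ⁺¹)) ⟶ coker(F(Iʲ) → F(Σʲ⁺¹B))`. -/
noncomputable def q (j : ℕ) : K F D (j + 1) ⟶ Cok F D j :=
  kernel.ι (F.map (D.m (j + 1))) ≫ cokernel.π (F.map (D.e j))

lemma comp_s (j : ℕ) : F.map (D.e j) ≫ s F D (j + 1) = l F D j := by
  apply (cancel_mono (kernel.ι (F.map (D.d (j + 1))))).1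
  erw [Category.assoc, s, kernel.lift_ι, l, kernel.lift_ι, ← F.map_comp]
  rfl

/-- The canonical map `coker(F(Iʲ) → F(Σʲ⁺¹B)) ⟶ Hʲ⁺¹(F(I^•))`. -/
noncomputable def toH (j : ℕ) : Cok F D j ⟶ H F D (j + 1) :=
  cokernel.desc (F.map (D.e j)) (s F D (j + 1) ≫ cokernel.π (l F D j)) (by
    erw [← Category.assoc, comp_s, cokernel.condition]; rfl)

lemma w₁ : ι0 F D ≫ r0 F D = 0 := by
  apply (cancel_mono (kernel.ι (F.map (D.d 0)))).1
  erw [Category.assoc, zero_comp]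
  show ι0 F D ≫ s F D 0 ≫ kernel.ι _ = 0
  erw [s, kernel.lift_ι, ι0, kernel.condition]; rfl

lemma w₂ : r0 F D ≫ conn F D 0 = 0 := by
  apply (cancel_mono (kernel.ι (F.map (D.m 1)))).1
  erw [Category.assoc, zero_comp]
  show s F D 0 ≫ toK F D 0 ≫ kernel.ι _ = 0
  erw [toK, kernel.lift_ι, ← Category.assoc, s, kernel.lift_ι, ← F.map_comp, D.wme, F.map_zero]

lemma toK_comp_q (j : ℕ) : toK F D j ≫ q F D j = 0 := by
  erw [q, ← Category.assoc, toK, kernel.lift_ι, Category.assoc, cokernel.condition, comp_zero]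

lemma w₃ : ∀ j, conn F D j ≫ q F D j = 0
  | 0 => toK_comp_q F D 0
  | (j + 1) => by
      apply (cancel_epi (cokernel.π (l F D j))).1
      erw [comp_zero, ← Category.assoc]
      show (cokernel.π _ ≫ cokernel.desc _ _ _) ≫ q F D (j + 1) = 0
      erw [cokernel.π_desc, toK_comp_q]

lemma w₄ (j : ℕ) : q F D j ≫ toH F D j = 0 := by
  erw [q, Category.assoc, toH, cokernel.π_desc, ← Category.assoc]
  have h : kernel.ι (F.map (D.m (j + 1))) ≫ s F D (j + 1) = 0 := by
    apply (cancel_mono (kernel.ι (F.map (D.d (j + 1))))).1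
    erw [Category.assoc, s, kernel.lift_ι, kernel.condition, zero_comp]
  erw [h, zero_comp]

lemma w₅ (j : ℕ) : toH F D j ≫ conn F D (j + 1) = 0 := by
  apply (cancel_epi (cokernel.π (F.map (D.e j)))).1
  erw [comp_zero, ← Category.assoc, toH, cokernel.π_desc, Category.assoc]
  show s F D (j + 1) ≫ cokernel.π _ ≫ cokernel.desc _ _ _ = 0
  erw [cokernel.π_desc]
  apply (cancel_mono (kernel.ι (F.map (D.m (j + 2))))).1
  erw [Category.assoc, zero_comp]
  show s F D (j + 1) ≫ toK F D (j + 1) ≫ kernel.ι _ = 0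
  erw [toK, kernel.lift_ι, ← Category.assoc, s, kernel.lift_ι, ← F.map_comp, D.wme, F.map_zero]

section AbHelpers

variable {X Y Z' : AddCommGrpCat.{w}}

lemma ab_ker_lift (f : X ⟶ Y) (x : X) (hx : f x = 0) :
    ∃ k : (kernel f : AddCommGrpCat.{w}), kernel.ι f k = x :=
  (ShortComplex.ab_exact_iff _).mp
    ((ShortComplex.mk (kernel.ι f) f (kernel.condition f)).exact_of_f_is_kernel
      (kernelIsKernel f)) x hx

lemma ab_coker_lift (f : X ⟶ Y) (y : Y) (hy : cokernel.π f y = 0) : ∃ x : X, f x = y :=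
  (ShortComplex.ab_exact_iff _).mp
    ((ShortComplex.mk f (cokernel.π f) (cokernel.condition f)).exact_of_g_is_cokernel
      (cokernelIsCokernel f)) y hy

lemma ab_ker_inj (f : X ⟶ Y) : Function.Injective (kernel.ι f) :=
  (AddCommGrpCat.mono_iff_injective _).mp inferInstance

lemma ab_coker_surj (f : X ⟶ Y) : Function.Surjective (cokernel.π f) :=
  (AddCommGrpCat.epi_iff_surjective _).mp inferInstance

lemma hom_comp_apply (f : X ⟶ Y) (g : Y ⟶ Z') {h : X ⟶ Z'} (w : f ≫ g = h) (x : X) :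
    g (f x) = h x := by rw [← comp_apply, w]

end AbHelpers

section PointwiseHelpers

lemma s_ι (j : ℕ) (x : F.obj (D.S j)) :
    kernel.ι (F.map (D.d j)) (s F D j x) = F.map (D.m j) x :=
  hom_comp_apply _ _ (kernel.lift_ι _ _ _) x

lemma l_ι (j : ℕ) (x : F.obj (D.I j)) :
    kernel.ι (F.map (D.d (j + 1))) (l F D j x) = F.map (D.d j) x :=
  hom_comp_apply _ _ (kernel.lift_ι _ _ _) x

lemma toK_ι (j : ℕ) (z : Z F D j) :
    kernel.ι (F.map (D.m (j + 1))) (toK F D j z)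
      = F.map (D.e j) (kernel.ι (F.map (D.d j)) z) := by
  have h := hom_comp_apply _ _ (kernel.lift_ι (F.map (D.m (j + 1)))
    (kernel.ι (F.map (D.d j)) ≫ F.map (D.e j)) (by
      rw [Category.assoc, ← F.map_comp]; exact kernel.condition _)) z
  erw [comp_apply] at h
  exact h

lemma conn_succ_π (j : ℕ) (z : Z F D (j + 1)) :
    conn F D (j + 1) (cokernel.π (l F D j) z) = toK F D (j + 1) z := by
  have h : cokernel.π (l F D j) ≫ conn F D (j + 1) = toK F D (j + 1) :=
    cokernel.π_desc _ _ _
  exact hom_comp_apply _ _ h z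

lemma toH_π (j : ℕ) (y : F.obj (D.S (j + 1))) :
    toH F D j (cokernel.π (F.map (D.e j)) y) = cokernel.π (l F D j) (s F D (j + 1) y) := by
  have h : cokernel.π (F.map (D.e j)) ≫ toH F D j
      = s F D (j + 1) ≫ cokernel.π (l F D j) := cokernel.π_desc _ _ _
  exact (hom_comp_apply _ _ h y).trans (comp_apply _ _ _)

lemma q_apply (j : ℕ) (k : K F D (j + 1)) :
    q F D j k = cokernel.π (F.map (D.e j)) (kernel.ι (F.map (D.m (j + 1))) k) := by
  rfl

end PointwiseHelpers

/-- **The right fundamental sequence of a half-exact covariant functor is exact.**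
Let `F` be an additive half-exact functor from `R`-modules to abelian groups, and let
`0 → B → I⁰ → I¹ → ⋯` be an injective resolution of `B = S 0` with cosyzygies `Σʲ B = S j`
(encoded by the short exact sequences `0 → S j → I j → S (j+1) → 0`).  Then the long sequence
`0 → ker(F(B) → F(I⁰)) → F(B) → H⁰(F(I^•)) → ker(F(ΣB) → F(I¹)) → coker(F(I⁰) → F(ΣB)) →`
`H¹(F(I^•)) → ker(F(Σ²B) → F(I²)) → coker(F(I¹) → F(Σ²B)) → H²(F(I^•)) → ⋯`,
with all maps the canonically induced ones, is exact. -/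
theorem right_fundamental_sequence_exact
    (hhalf : ∀ ⦃X Y Z : ModuleCat.{v} R⦄ (f : X ⟶ Y) (g : Y ⟶ Z) (w : f ≫ g = 0),
      (ShortComplex.mk f g w).ShortExact →
      (ShortComplex.mk (F.map f) (F.map g)
        (by rw [← F.map_comp, w, F.map_zero])).Exact)
    (hinj : ∀ j, Injective (D.I j))
    (hres : ∀ j, (ShortComplex.mk (D.m j) (D.e j) (D.wme j)).ShortExact) :
    Mono (ι0 F D) ∧
    (ShortComplex.mk _ _ (w₁ F D)).Exact ∧
    (ShortComplex.mk _ _ (w₂ F D)).Exact ∧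
    (∀ j, (ShortComplex.mk _ _ (w₃ F D j)).Exact) ∧
    (∀ j, (ShortComplex.mk _ _ (w₄ F D j)).Exact) ∧
    (∀ j, (ShortComplex.mk _ _ (w₅ F D j)).Exact) := by
  -- elementwise form of half-exactness applied to the resolution's short exact sequences
  have hex : ∀ j (y : F.obj (D.I j)), F.map (D.e j) y = 0 →
      ∃ b : F.obj (D.S j), F.map (D.m j) b = y := fun j =>
    (ShortComplex.ab_exact_iff _).mp (hhalf (D.m j) (D.e j) (D.wme j) (hres j))
  refine ⟨inferInstanceAs (Mono (kernel.ι _)), ?_, ?_, ?_, ?_, ?_⟩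
  · -- exactness at F(B)
    rw [ShortComplex.ab_exact_iff]
    intro x hx
    have h1 : F.map (D.m 0) x = 0 := by
      rw [← s_ι F D 0 x]
      show kernel.ι (F.map (D.d 0)) (r0 F D x) = 0
      erw [hx, map_zero]
    obtain ⟨k, hk⟩ := ab_ker_lift (F.map (D.m 0)) x h1
    exact ⟨k, hk⟩
  · -- exactness at H⁰
    rw [ShortComplex.ab_exact_iff]
    intro z hz
    have h1 : F.map (D.e 0) (kernel.ι (F.map (D.d 0)) z) = 0 := by
      rw [← toK_ι F D 0 z]
      show kernel.ι (F.map (D.m 1)) (conn F D 0 z) = 0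
      erw [hz, map_zero]
    obtain ⟨b, hb⟩ := hex 0 _ h1
    refine ⟨b, ab_ker_inj (F.map (D.d 0)) ?_⟩
    show kernel.ι (F.map (D.d 0)) (s F D 0 b) = kernel.ι (F.map (D.d 0)) z
    rw [s_ι, hb]
  · -- exactness at K (j+1)
    intro j
    rw [ShortComplex.ab_exact_iff]
    intro x hx
    rw [q_apply] at hx
    obtain ⟨w, hw⟩ := ab_coker_lift (F.map (D.e j)) _ hx
    have hker : F.map (D.m (j + 1)) (kernel.ι (F.map (D.m (j + 1))) x) = 0 :=
      hom_comp_apply _ _ (kernel.condition _) x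
    have hdw : F.map (D.d j) w = 0 := by
      have : F.map (D.d j) w = F.map (D.m (j + 1)) (F.map (D.e j) w) := by
        rw [← comp_apply, ← F.map_comp]; rfl
      rw [this, hw, hker]
    obtain ⟨z, hz⟩ := ab_ker_lift (F.map (D.d j)) w hdw
    have key : toK F D j z = x := by
      apply ab_ker_inj (F.map (D.m (j + 1)))
      erw [toK_ι, hz, hw]
    match j with
    | 0 => exact ⟨z, key⟩
    | (j + 1) => exact ⟨cokernel.π (l F D j) z, by erw [conn_succ_π, key]⟩
  · -- exactness at Cok j
    intro j
    rw [ShortComplex.ab_exact_iff]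
    intro c hc
    obtain ⟨y, hy⟩ := ab_coker_surj (F.map (D.e j)) c
    have h1 : cokernel.π (l F D j) (s F D (j + 1) y) = 0 := by
      rw [← toH_π, hy]; exact hc
    obtain ⟨w, hw⟩ := ab_coker_lift (l F D j) _ h1
    have h2 : F.map (D.m (j + 1)) (y - F.map (D.e j) w) = 0 := by
      rw [map_sub]
      have e1 : F.map (D.m (j + 1)) (F.map (D.e j) w) = F.map (D.d j) w := by
        rw [← comp_apply, ← F.map_comp]; rfl
      have e2 : F.map (D.d j) w = F.map (D.m (j + 1)) y := by
        rw [← l_ι F D j w, hw, s_ι]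
      rw [e1, e2, sub_self]
    obtain ⟨k, hk⟩ := ab_ker_lift (F.map (D.m (j + 1))) _ h2
    refine ⟨k, ?_⟩
    erw [q_apply, hk, map_sub, hy]
    have : cokernel.π (F.map (D.e j)) (F.map (D.e j) w) = 0 :=
      hom_comp_apply _ _ (cokernel.condition _) w
    erw [this, sub_zero]
  · -- exactness at H (j+1)
    intro j
    rw [ShortComplex.ab_exact_iff]
    intro x hx
    obtain ⟨z, hz⟩ := ab_coker_surj (l F D j) x
    have h1 : F.map (D.e (j + 1)) (kernel.ι (F.map (D.d (j + 1))) z) = 0 := by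
      erw [← toK_ι F D (j + 1) z, ← conn_succ_π F D j z, hz, hx, map_zero]
    obtain ⟨y, hy⟩ := hex (j + 1) _ h1
    refine ⟨cokernel.π (F.map (D.e j)) y, ?_⟩
    rw [toH_π]
    have : s F D (j + 1) y = z := by
      apply ab_ker_inj (F.map (D.d (j + 1)))
      rw [s_ι, hy]
    rw [this, hz]

end RightFundamentalSeq
end

section
/- Let R be a commutative ring and A a finitely presented R-module with a presentation P₁ →d P₀ → A → 0 in which P₀, P₁ are finitely generated projective; write (−)* = Hom_R(−, R) and Tr A := coker(d* : P₀* → P₁*). Then for every R-module B and every monomorphism ι : B ↪ I with I an injective R-module, there is an isomorphism Ext¹_R(Tr A, B) ≅ ker(id_A ⊗ ι : A ⊗_R B → A ⊗_R I). -/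
open TensorProduct CategoryTheory

/-- The transpose `Tr A = coker(d* : P₀* → P₁*)` of a finitely presented module with
presentation `P₁ →d P₀ → A → 0` by finitely generated projectives. -/
def Transpose {R : Type} [CommRing R] {P₁ P₀ : Type}
    [AddCommGroup P₁] [Module R P₁] [AddCommGroup P₀] [Module R P₀]
    (d : P₁ →ₗ[R] P₀) : Type :=
  (P₁ →ₗ[R] R) ⧸ LinearMap.range (d.dualMap : (P₀ →ₗ[R] R) →ₗ[R] (P₁ →ₗ[R] R))

instance {R : Type} [CommRing R] {P₁ P₀ : Type}
    [AddCommGroup P₁] [Module R P₁] [AddCommGroup P₀] [Module R P₀]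
    (d : P₁ →ₗ[R] P₀) : AddCommGroup (Transpose d) :=
  inferInstanceAs (AddCommGroup ((P₁ →ₗ[R] R) ⧸ LinearMap.range d.dualMap))

instance {R : Type} [CommRing R] {P₁ P₀ : Type}
    [AddCommGroup P₁] [Module R P₁] [AddCommGroup P₀] [Module R P₀]
    (d : P₁ →ₗ[R] P₀) : Module R (Transpose d) :=
  inferInstanceAs (Module R ((P₁ →ₗ[R] R) ⧸ LinearMap.range d.dualMap))

/-- The abelian group `Ext^n_R(Tr A, B)`. -/
noncomputable def ExtTr {R : Type} [CommRing R] {P₁ P₀ : Type}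
    [AddCommGroup P₁] [Module R P₁] [AddCommGroup P₀] [Module R P₀]
    (d : P₁ →ₗ[R] P₀) (n : ℕ) (B : Type) [AddCommGroup B] [Module R B] : Type :=
  ((Ext R (ModuleCat R) n).obj (Opposite.op (ModuleCat.of R (Transpose d)))).obj
    (ModuleCat.of R B)

noncomputable instance {R : Type} [CommRing R] {P₁ P₀ : Type}
    [AddCommGroup P₁] [Module R P₁] [AddCommGroup P₀] [Module R P₀]
    (d : P₁ →ₗ[R] P₀) (n : ℕ) (B : Type) [AddCommGroup B] [Module R B] :
    AddCommGroup (ExtTr d n B) :=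
  inferInstanceAs (AddCommGroup
    (((Ext R (ModuleCat R) n).obj (Opposite.op (ModuleCat.of R (Transpose d)))).obj
      (ModuleCat.of R B)))

namespace ExtTrAux

variable {R : Type} [CommRing R]

/-- The natural map `P ⊗ X → Hom(P*, X)`. -/
noncomputable def eta (P X : Type) [AddCommGroup P] [Module R P] [AddCommGroup X] [Module R X] :
    P ⊗[R] X →ₗ[R] (Module.Dual R P →ₗ[R] X) :=
  (dualTensorHom R (Module.Dual R P) X).comp ((Module.Dual.eval R P).rTensor X)

@[simp] lemma eta_tmul {P X : Type} [AddCommGroup P] [Module R P] [AddCommGroup X] [Module R X]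
    (p : P) (x : X) (f : Module.Dual R P) :
    eta P X (p ⊗ₜ x) f = f p • x := by
  simp [eta]

lemma eta_nat_left {P Q X : Type} [AddCommGroup P] [Module R P] [AddCommGroup Q] [Module R Q]
    [AddCommGroup X] [Module R X] (u : P →ₗ[R] Q) (x : P ⊗[R] X) :
    eta Q X (u.rTensor X x) = (eta P X x).comp u.dualMap := by
  induction x using TensorProduct.induction_on with
  | zero => simp
  | tmul p y => ext f; simp
  | add a b ha hb => simp [ha, hb, LinearMap.add_comp]

lemma eta_nat_right {P X Y : Type} [AddCommGroup P] [Module R P] [AddCommGroup X] [Module R X]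
    [AddCommGroup Y] [Module R Y] (v : X →ₗ[R] Y) (x : P ⊗[R] X) :
    eta P Y (v.lTensor P x) = v.comp (eta P X x) := by
  induction x using TensorProduct.induction_on with
  | zero => simp
  | tmul p y => ext f; simp
  | add a b ha hb => simp [ha, hb, LinearMap.comp_add]

lemma eta_bijective_free (n : ℕ) (X : Type) [AddCommGroup X] [Module R X] :
    Function.Bijective (eta (Fin n → R) X (R := R)) := by
  have h1 : Function.Bijective ((Module.Dual.eval R (Fin n → R)).rTensor X) := by
    have : (Module.Dual.eval R (Fin n → R)).rTensor X =
        ((Module.evalEquiv R (Fin n → R)).toLinearMap).rTensor X := by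
      rw [Module.evalEquiv_toLinearMap]
    rw [this]
    exact (LinearEquiv.rTensor X (Module.evalEquiv R (Fin n → R))).bijective
  have h2 : Function.Bijective (dualTensorHom R (Module.Dual R (Fin n → R)) X) := by
    rw [← dualTensorHomEquivOfBasis_toLinearMap
      (Module.Free.chooseBasis R (Module.Dual R (Fin n → R)))]
    exact (dualTensorHomEquivOfBasis _).bijective
  exact h2.comp h1

lemma eta_bijective (P : Type) [AddCommGroup P] [Module R P]
    [Module.Finite R P] [Module.Projective R P] (X : Type) [AddCommGroup X] [Module R X] :
    Function.Bijective (eta P X (R := R)) := by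
  obtain ⟨n, π, hπ⟩ := Module.Finite.exists_fin' R P
  obtain ⟨s, hs⟩ := Module.projective_lifting_property π LinearMap.id hπ
  constructor
  · rw [injective_iff_map_eq_zero]
    intro x hx
    have h1 : eta (Fin n → R) X (s.rTensor X x) = 0 := by
      rw [eta_nat_left, hx, LinearMap.zero_comp]
    have h2 : s.rTensor X x = 0 := by
      apply (eta_bijective_free n X).injective
      simp [h1]
    calc x = LinearMap.id.rTensor X x := by rw [LinearMap.rTensor_id]; rfl
    _ = (π ∘ₗ s).rTensor X x := by rw [hs]
    _ = π.rTensor X (s.rTensor X x) := by rw [LinearMap.rTensor_comp]; rfl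
    _ = 0 := by rw [h2, map_zero]
  · intro φ
    obtain ⟨y, hy⟩ := (eta_bijective_free n X).surjective (φ.comp s.dualMap)
    refine ⟨π.rTensor X y, ?_⟩
    rw [eta_nat_left, hy]
    have hss : ∀ f : Module.Dual R P, s.dualMap (π.dualMap f) = f := by
      intro f; ext x
      have := congrArg (fun g : P →ₗ[R] P => f (g x)) hs
      simpa using this
    ext f
    simp [hss f]

lemma extend_of_vanishing {I : Type} [AddCommGroup I] [Module R I] (hI : Module.Injective R I)
    {M N : Type} [AddCommGroup M] [Module R M] [AddCommGroup N] [Module R N]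
    (u : M →ₗ[R] N) (φ : M →ₗ[R] I) (hφ : LinearMap.ker u ≤ LinearMap.ker φ) :
    ∃ ψ : N →ₗ[R] I, ψ ∘ₗ u = φ := by
  set K := LinearMap.ker u
  have hinj : Function.Injective (K.liftQ u le_rfl) := by
    rw [← LinearMap.ker_eq_bot]
    exact Submodule.ker_liftQ_eq_bot _ _ _ le_rfl
  obtain ⟨h, hh⟩ := hI.out (K.liftQ u le_rfl) hinj (K.liftQ φ hφ)
  refine ⟨h, ?_⟩
  ext x
  have := hh (Submodule.Quotient.mk x)
  simpa [Submodule.liftQ_apply] using this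

variable {A P₁ P₀ B I : Type}
    [AddCommGroup A] [Module R A] [AddCommGroup P₁] [Module R P₁] [AddCommGroup P₀] [Module R P₀]
    [Module.Finite R P₁] [Module.Projective R P₁] [Module.Finite R P₀] [Module.Projective R P₀]
    [AddCommGroup B] [Module R B] [AddCommGroup I] [Module R I]

theorem core (d : P₁ →ₗ[R] P₀) (p : P₀ →ₗ[R] A)
    (hp : Function.Surjective p) (hdp : LinearMap.range d = LinearMap.ker p)
    (hI : Module.Injective R I) (ι : B →ₗ[R] I) (hι : Function.Injective ι)
    {W V H : Type} [AddCommGroup W] [Module R W] [AddCommGroup V] [Module R V]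
    [AddCommGroup H] [Module R H] (eH : H ≃ₗ[R] (Module.Dual R P₀ →ₗ[R] B))
    (G : H →ₗ[R] W)
    (hG : ∀ g, G g = 0 ↔ ∀ f ∈ LinearMap.ker d.dualMap, eH g f = 0)
    (T : V →ₗ[R] LinearMap.ker G)
    (hT : ∀ y : LinearMap.ker G, y ∈ LinearMap.range T ↔
      ∃ f : Module.Dual R P₁ →ₗ[R] B, eH y = f ∘ₗ d.dualMap) :
    Nonempty ((LinearMap.ker G ⧸ LinearMap.range T) ≃+
      LinearMap.ker (LinearMap.lTensor A ι)) := by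
  have hexact : Function.Exact d p := LinearMap.exact_iff.mpr hdp.symm
  have exB : Function.Exact (d.rTensor B) (p.rTensor B) := rTensor_exact B hexact hp
  have exI : Function.Exact (d.rTensor I) (p.rTensor I) := rTensor_exact I hexact hp
  have hpd : p ∘ₗ d = 0 := by
    ext z
    have : d z ∈ LinearMap.ker p := hdp ▸ LinearMap.mem_range_self d z
    simpa using this
  have hpd' : ∀ (X : Type) [AddCommGroup X] [Module R X] (w : P₁ ⊗[R] X),
      p.rTensor X (d.rTensor X w) = 0 := by
    intro X _ _ w
    rw [← LinearMap.comp_apply, ← LinearMap.rTensor_comp, hpd]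
    simp
  let e₀ : P₀ ⊗[R] B ≃ₗ[R] (Module.Dual R P₀ →ₗ[R] B) :=
    LinearEquiv.ofBijective (eta P₀ B) (eta_bijective P₀ B)
  let e₁ : P₁ ⊗[R] B ≃ₗ[R] (Module.Dual R P₁ →ₗ[R] B) :=
    LinearEquiv.ofBijective (eta P₁ B) (eta_bijective P₁ B)
  let eI : P₁ ⊗[R] I ≃ₗ[R] (Module.Dual R P₁ →ₗ[R] I) :=
    LinearEquiv.ofBijective (eta P₁ I) (eta_bijective P₁ I)
  have comm : ∀ x : P₀ ⊗[R] B,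
      (LinearMap.lTensor A ι) (p.rTensor B x) = p.rTensor I (ι.lTensor P₀ x) := by
    intro x
    rw [← LinearMap.comp_apply, ← LinearMap.comp_apply,
      LinearMap.lTensor_comp_rTensor, LinearMap.rTensor_comp_lTensor]
  have key : ∀ x : P₀ ⊗[R] B,
      (LinearMap.lTensor A ι) (p.rTensor B x) = 0 ↔
        ∀ f ∈ LinearMap.ker d.dualMap, eta P₀ B x f = 0 := by
    intro x
    constructor
    · intro h f hf
      rw [comm] at h
      obtain ⟨w, hw⟩ := (exI (ι.lTensor P₀ x)).mp h
      apply hι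
      have h1 : ι (eta P₀ B x f) = eta P₀ I (ι.lTensor P₀ x) f := by
        rw [eta_nat_right]; rfl
      rw [h1, ← hw, eta_nat_left]
      simp only [LinearMap.coe_comp, Function.comp_apply]
      rw [LinearMap.mem_ker.mp hf]
      simp
    · intro h
      obtain ⟨ψ, hψ⟩ := extend_of_vanishing hI d.dualMap ((ι.comp (eta P₀ B x)))
        (by intro f hf
            rw [LinearMap.mem_ker, LinearMap.comp_apply, h f hf, map_zero])
      have h2 : ι.lTensor P₀ x = d.rTensor I (eI.symm ψ) := by
        apply (eta_bijective P₀ I).injective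
        rw [eta_nat_left, eta_nat_right]
        have : eta P₁ I (eI.symm ψ) = ψ := eI.apply_symm_apply ψ
        rw [this, hψ]
      rw [comm, h2, hpd' I]
  -- the map Φ
  have memker : ∀ g : LinearMap.ker G,
      (LinearMap.lTensor A ι) (p.rTensor B (e₀.symm (eH g))) = 0 := by
    intro g
    rw [key]
    intro f hf
    have : eta P₀ B (e₀.symm (eH g)) = eH g :=
      e₀.apply_symm_apply _
    rw [this]
    exact (hG _).mp (LinearMap.mem_ker.mp g.2) f hf
  let Φ : LinearMap.ker G →ₗ[R] LinearMap.ker (LinearMap.lTensor A ι) :=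
    LinearMap.codRestrict _ ((p.rTensor B) ∘ₗ (e₀.symm.toLinearMap.comp (eH.toLinearMap.comp (LinearMap.ker G).subtype)))
      (fun g => by simpa using memker g)
  have hΦ : ∀ g : LinearMap.ker G,
      (Φ g : A ⊗[R] B) = p.rTensor B (e₀.symm (eH g)) := fun g => rfl
  have hΦT : LinearMap.range T ≤ LinearMap.ker Φ := by
    rintro _ ⟨v, rfl⟩
    obtain ⟨f, hf⟩ := (hT (T v)).mp (LinearMap.mem_range_self T v)
    rw [LinearMap.mem_ker]
    apply Subtype.ext
    rw [hΦ]
    have h3 : e₀.symm (eH (T v)) = d.rTensor B (e₁.symm f) := by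
      apply e₀.injective
      rw [e₀.apply_symm_apply, hf]
      show f ∘ₗ d.dualMap = e₀ (d.rTensor B (e₁.symm f))
      show f ∘ₗ d.dualMap = eta P₀ B (d.rTensor B (e₁.symm f))
      rw [eta_nat_left]
      congr 1
      exact (e₁.apply_symm_apply f).symm
    rw [h3, hpd' B]
    rfl
  let Φq : (LinearMap.ker G ⧸ LinearMap.range T) →ₗ[R] LinearMap.ker (LinearMap.lTensor A ι) :=
    (LinearMap.range T).liftQ Φ hΦT
  have hinj : Function.Injective Φq := by
    rw [← LinearMap.ker_eq_bot]
    apply Submodule.ker_liftQ_eq_bot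
    intro g hg
    have h4 : p.rTensor B (e₀.symm (eH g)) = 0 := by
      have := LinearMap.mem_ker.mp hg
      have := congrArg (Subtype.val) this
      rwa [hΦ] at this
    obtain ⟨z, hz⟩ := (exB _).mp h4
    rw [hT]
    refine ⟨eta P₁ B z, ?_⟩
    calc eH g = eta P₀ B (e₀.symm _) := (e₀.apply_symm_apply _).symm
    _ = eta P₀ B (d.rTensor B z) := by rw [hz]
    _ = (eta P₁ B z) ∘ₗ d.dualMap := eta_nat_left d z
  have hsurj : Function.Surjective Φq := by
    intro a
    obtain ⟨x, hx⟩ := LinearMap.rTensor_surjective B hp (a : A ⊗[R] B)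
    have ha : (LinearMap.lTensor A ι) (p.rTensor B x) = 0 := by
      rw [hx]
      exact LinearMap.mem_ker.mp a.2
    have hgG : G (eH.symm (eta P₀ B x)) = 0 :=
      (hG _).mpr (by rw [eH.apply_symm_apply]; exact (key x).mp ha)
    refine ⟨Submodule.Quotient.mk ⟨eH.symm (eta P₀ B x), LinearMap.mem_ker.mpr hgG⟩, ?_⟩
    apply Subtype.ext
    show (Φ _ : A ⊗[R] B) = (a : A ⊗[R] B)
    rw [hΦ]
    have : e₀.symm (eta P₀ B x) = x := e₀.symm_apply_apply x
    rw [show eH ((⟨eH.symm (eta P₀ B x), LinearMap.mem_ker.mpr hgG⟩ : LinearMap.ker G) :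
      H) = eta P₀ B x from eH.apply_symm_apply _, this, hx]
  exact ⟨(LinearEquiv.ofBijective Φq ⟨hinj, hsurj⟩).toAddEquiv⟩



variable {R : Type} [CommRing R] {P₁ P₀ : Type} [AddCommGroup P₁] [Module R P₁]
  [AddCommGroup P₀] [Module R P₀]
  [Module.Finite R P₁] [Module.Projective R P₁] [Module.Finite R P₀] [Module.Projective R P₀]
  (d : P₁ →ₗ[R] P₀)

/-- The free cover of the kernel of `d*`. -/
noncomputable def d2 : ((LinearMap.ker d.dualMap) →₀ R) →ₗ[R] Module.Dual R P₀ :=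
  Finsupp.linearCombination R (fun k => (k : Module.Dual R P₀))

lemma range_d2 : LinearMap.range (d2 d) = LinearMap.ker d.dualMap := by
  apply le_antisymm
  · rintro _ ⟨x, rfl⟩
    induction x using Finsupp.induction_linear with
    | zero => simp
    | add a b ha hb => rw [map_add]; exact Submodule.add_mem _ ha hb
    | single k r =>
      have : d2 d (Finsupp.single k r) = r • (k : Module.Dual R P₀) := by simp [d2]
      rw [this]
      exact Submodule.smul_mem _ _ k.2
  · intro x hx
    exact ⟨Finsupp.single ⟨x, hx⟩ 1, by simp [d2]⟩

lemma d2_single (k : LinearMap.ker d.dualMap) :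
    d2 d (Finsupp.single k 1) = (k : Module.Dual R P₀) := by
  simp [d2]

lemma dualMap_comp_d2 : d.dualMap ∘ₗ d2 d = 0 := by
  ext x
  simpa [d2_single d x] using x.2

omit [Module.Finite R P₁] [Module.Projective R P₁] [Module.Finite R P₀] [Module.Projective R P₀] in
lemma syz_d_comp {X Y : ModuleCat R} (f : X ⟶ Y) : Projective.d f ≫ f = 0 :=
  (Category.assoc (Projective.π (Limits.kernel f)) (Limits.kernel.ι f) f).trans
    ((congrArg (Projective.π (Limits.kernel f) ≫ ·) (Limits.kernel.condition f)).trans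
      Limits.comp_zero)

/-- The projective resolution complex of the transpose. -/
noncomputable def cx : ChainComplex (ModuleCat R) ℕ :=
  ChainComplex.mk (ModuleCat.of R (Module.Dual R P₁)) (ModuleCat.of R (Module.Dual R P₀))
    (ModuleCat.of R ((LinearMap.ker d.dualMap) →₀ R))
    (ModuleCat.ofHom d.dualMap : ModuleCat.of R (Module.Dual R P₀) ⟶ ModuleCat.of R (Module.Dual R P₁))
    (ModuleCat.ofHom (d2 d) : ModuleCat.of R ((LinearMap.ker d.dualMap) →₀ R) ⟶ ModuleCat.of R (Module.Dual R P₀))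
    (by rw [← ModuleCat.ofHom_comp, dualMap_comp_d2]; rfl)
    (fun S => ⟨Projective.syzygies S.f, Projective.d S.f, syz_d_comp S.f⟩)

instance cx_projective (n : ℕ) : Projective ((cx d).X n) := by
  match n with
  | 0 => exact (IsProjective.iff_projective _).mp inferInstance
  | 1 => exact (IsProjective.iff_projective _).mp inferInstance
  | 2 => exact (IsProjective.iff_projective _).mp inferInstance
  | (n+3) => apply Projective.projective_over

lemma cx_exactAt_succ (n : ℕ) : (cx d).ExactAt (n + 1) := by
  rw [HomologicalComplex.exactAt_iff' _ (n + 1 + 1) (n + 1) n (by simp) (by simp)]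
  match n with
  | 0 =>
    rw [ShortComplex.moduleCat_exact_iff]
    intro x hx
    exact ⟨Finsupp.single ⟨x, hx⟩ 1, d2_single d _⟩
  | n + 1 =>
    refine (ShortComplex.exact_iff_of_iso (S₁ := (cx d).sc' (n + 1 + 1 + 1) (n + 1 + 1) (n + 1))
      (S₂ := ShortComplex.mk
      (Projective.d ((cx d).d (n + 2) (n + 1))) ((cx d).d (n + 2) (n + 1)) (syz_d_comp _))
      (ShortComplex.isoMk (ChainComplex.mkXIso (ModuleCat.of R (Module.Dual R P₁))
        (ModuleCat.of R (Module.Dual R P₀)) (ModuleCat.of R ((LinearMap.ker d.dualMap) →₀ R))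
        (ModuleCat.ofHom d.dualMap) (ModuleCat.ofHom (d2 d)) _
        (fun S => ⟨Projective.syzygies S.f, Projective.d S.f, syz_d_comp S.f⟩) n) (Iso.refl _) (Iso.refl _)
        ?_ ?_)).2 (exact_d_f _)
    · exact ((ChainComplex.mk_d (ModuleCat.of R (Module.Dual R P₁))
        (ModuleCat.of R (Module.Dual R P₀)) (ModuleCat.of R ((LinearMap.ker d.dualMap) →₀ R))
        (ModuleCat.ofHom d.dualMap) (ModuleCat.ofHom (d2 d)) _
        (fun S => ⟨Projective.syzygies S.f, Projective.d S.f, syz_d_comp S.f⟩) n).symm).trans (Category.comp_id _).symm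
    · exact (Category.id_comp _).trans (Category.comp_id _).symm

/-- The augmentation map. -/
noncomputable def pi0 : ModuleCat.of R (Module.Dual R P₁) ⟶ ModuleCat.of R (Transpose d) :=
  ModuleCat.ofHom (X := Module.Dual R P₁) (Y := Transpose d) (LinearMap.range d.dualMap).mkQ

lemma pi0_surjective : Function.Surjective (pi0 d) :=
  Submodule.mkQ_surjective _

/-- The augmented short complex `Dual P₀ → Dual P₁ → Tr d`. -/
noncomputable def sc0 : ShortComplex (ModuleCat R) :=
  ShortComplex.mk
    (ModuleCat.ofHom (X := Module.Dual R P₀) (Y := Module.Dual R P₁) d.dualMap)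
    (pi0 d)
    (by
      refine ModuleCat.hom_ext (LinearMap.ext fun f => ?_)
      show (LinearMap.range d.dualMap).mkQ (d.dualMap f) = 0
      rw [Submodule.mkQ_apply, Submodule.Quotient.mk_eq_zero]
      exact LinearMap.mem_range_self _ _)

lemma sc0_exact : (sc0 d).Exact := by
  rw [ShortComplex.moduleCat_exact_iff]
  intro x hx
  have : @id (Module.Dual R P₁) x ∈ LinearMap.range d.dualMap := by
    rwa [← Submodule.Quotient.mk_eq_zero (LinearMap.range d.dualMap)]
  exact this

instance : Epi (pi0 d) :=
  (ModuleCat.epi_iff_surjective _).mpr (pi0_surjective d)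

instance : Epi (sc0 d).g := by
  dsimp [sc0]; infer_instance

/-- The explicit projective resolution of the transpose. -/
noncomputable def res : ProjectiveResolution (ModuleCat.of R (Transpose d)) where
  complex := cx d
  π := (ChainComplex.toSingle₀Equiv _ _).symm ⟨pi0 d, by
    show (cx d).d 1 0 ≫ pi0 d = 0
    have h10 : (cx d).d 1 0 =
        (ModuleCat.ofHom d.dualMap : ModuleCat.of R (Module.Dual R P₀) ⟶ ModuleCat.of R (Module.Dual R P₁)) :=
      ChainComplex.mk_d_1_0 _ _ _ _ _ _ _
    rw [h10]
    exact (sc0 d).zero⟩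
  quasiIso := ⟨fun n => by
    cases n with
    | zero =>
      rw [ChainComplex.quasiIsoAt₀_iff, ShortComplex.quasiIso_iff_of_zeros']
      · refine (ShortComplex.exact_and_epi_g_iff_of_iso ?_).2 ⟨sc0_exact d, by
          dsimp [sc0]; infer_instance⟩
        exact ShortComplex.isoMk (Iso.refl _) (Iso.refl _) (Iso.refl _)
          (by simp [cx, sc0]; rfl) (by simp [sc0, pi0]; rfl)
      all_goals rfl
    | succ n =>
      rw [quasiIsoAt_iff_exactAt']
      · apply cx_exactAt_succ
      · apply ChainComplex.exactAt_succ_single_obj⟩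


section Assembly
variable {R : Type} [CommRing R] {P₁ P₀ : Type} [AddCommGroup P₁] [Module R P₁]
  [AddCommGroup P₀] [Module R P₀]
  [Module.Finite R P₁] [Module.Projective R P₁] [Module.Finite R P₀] [Module.Projective R P₀]
  (d : P₁ →ₗ[R] P₀) (B : Type) [AddCommGroup B] [Module R B]

/-- The cochain complex `Hom(cx d, B)`. -/
noncomputable def KB : CochainComplex (ModuleCat R) ℕ :=
  (cx d).linearYonedaObj R (ModuleCat.of R B)

/-- Its short complex in degrees 0,1,2. -/
noncomputable def SB : ShortComplex (ModuleCat R) := (KB d B).sc' 0 1 2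

/-- `Ext¹(Tr d, B)` is the concrete homology of `Hom(cx d, B)` in degree 1. -/
noncomputable def extIsoConcrete :
    ((Ext R (ModuleCat R) 1).obj (Opposite.op (ModuleCat.of R (Transpose d)))).obj
      (ModuleCat.of R B) ≅ (SB d B).moduleCatLeftHomologyData.H :=
  (res d).isoExt 1 (ModuleCat.of R B) ≪≫
    (KB d B).homologyIsoSc' 0 1 2 (by simp) (by simp) ≪≫ (SB d B).moduleCatHomologyIso

end Assembly

end ExtTrAux

/-- For a finitely presented module `A` over a commutative ring `R` with presentation
`P₁ →d P₀ →p A → 0` by finitely generated projectives, for every `R`-module `B` and every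
monomorphism `ι : B ↪ I` into an injective module `I`, there is an isomorphism
`Ext¹(Tr A, B) ≅ ker(id_A ⊗ ι : A ⊗ B → A ⊗ I)`. -/
theorem ext_one_transpose_iso_substabilization {R : Type} [CommRing R]
    (A : Type) [AddCommGroup A] [Module R A]
    (P₁ P₀ : Type) [AddCommGroup P₁] [Module R P₁] [AddCommGroup P₀] [Module R P₀]
    [Module.Finite R P₁] [Module.Projective R P₁]
    [Module.Finite R P₀] [Module.Projective R P₀]
    (d : P₁ →ₗ[R] P₀) (p : P₀ →ₗ[R] A)
    (hp : Function.Surjective p) (hdp : LinearMap.range d = LinearMap.ker p)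
    (B I : Type) [AddCommGroup B] [Module R B] [AddCommGroup I] [Module R I]
    (hI : Module.Injective R I) (ι : B →ₗ[R] I) (hι : Function.Injective ι) :
    Nonempty (ExtTr d 1 B ≃+
      LinearMap.ker (LinearMap.lTensor A ι : A ⊗[R] B →ₗ[R] A ⊗[R] I)) := by
  classical
  let eH : ((ExtTrAux.cx d).X 1 ⟶ ModuleCat.of R B) ≃ₗ[R] (Module.Dual R P₀ →ₗ[R] B) :=
    ModuleCat.homLinearEquiv
  let G : ((ExtTrAux.cx d).X 1 ⟶ ModuleCat.of R B) →ₗ[R]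
      ((ExtTrAux.cx d).X 2 ⟶ ModuleCat.of R B) :=
    (ExtTrAux.SB d B).g.hom
  have hG : ∀ g : (ExtTrAux.cx d).X 1 ⟶ ModuleCat.of R B,
      G g = 0 ↔ ∀ f ∈ LinearMap.ker d.dualMap, eH g f = 0 := by
    intro g
    constructor
    · intro h f hf
      have h2 := congrArg (fun φ => ModuleCat.Hom.hom φ
        (Finsupp.single (⟨f, hf⟩ : LinearMap.ker d.dualMap) (1 : R))) h
      have h3 : g.hom (ExtTrAux.d2 d (Finsupp.single ⟨f, hf⟩ 1)) = 0 := h2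
      rw [ExtTrAux.d2_single] at h3
      exact h3
    · intro h
      refine ModuleCat.hom_ext (LinearMap.ext fun x => ?_)
      show g.hom (ExtTrAux.d2 d x) = 0
      have hx : ExtTrAux.d2 d x ∈ LinearMap.ker d.dualMap := by
        have hy := LinearMap.mem_range_self (ExtTrAux.d2 d) x
        rwa [ExtTrAux.range_d2 d] at hy
      exact h _ hx
  let T : ((ExtTrAux.cx d).X 0 ⟶ ModuleCat.of R B) →ₗ[R] LinearMap.ker G :=
    (ExtTrAux.SB d B).moduleCatToCycles
  have hT2 : ∀ f : (ExtTrAux.cx d).X 0 ⟶ ModuleCat.of R B,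
      eH (T f) = f.hom ∘ₗ d.dualMap :=
    fun f => rfl
  have hT : ∀ y : LinearMap.ker G,
      y ∈ LinearMap.range T ↔
        ∃ f : Module.Dual R P₁ →ₗ[R] B,
          eH y = f ∘ₗ d.dualMap := by
    intro y
    constructor
    · rintro ⟨v, rfl⟩
      exact ⟨v.hom, hT2 v⟩
    · rintro ⟨f, hf⟩
      exact ⟨ModuleCat.ofHom f, Subtype.ext (eH.injective ((hT2 _).trans hf.symm))⟩
  obtain ⟨e⟩ := ExtTrAux.core d p hp hdp hI ι hι (eH := eH) (G := G) hG (T := T) hT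
  exact ⟨(((ExtTrAux.extIsoConcrete d B).toLinearEquiv).toAddEquiv).trans e⟩
end

section
/- Let R be a commutative ring, A an R-module, and G : ModuleCat R ⥤ Ab an additive functor preserving arbitrary direct sums (coproducts). If φ and ψ are natural transformations from the functor A ⊗_R − to G whose components at the R-module R coincide, then φ = ψ. In other words, every natural transformation A ⊗_R − ⟶ G is uniquely determined by its component at R. -/
open CategoryTheory Limits MonoidalCategory

/-- Let `R` be a commutative ring, `A` an `R`-module, and `G` an additive functor from
`R`-modules to abelian groups preserving arbitrary direct sums.  Any two natural
transformations from the tensor product functor `A ⊗ᵣ −` to `G` that agree at the module `R`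
coincide, i.e. a natural transformation `A ⊗ᵣ − ⟶ G` is uniquely determined by its component
at `R`. -/
theorem tensor_nat_trans_determined_by_ring_component
    {R : Type} [CommRing R] (A : Type) [AddCommGroup A] [Module R A]
    (G : ModuleCat R ⥤ AddCommGrpCat) [G.Additive]
    (hG : ∀ ι : Type, PreservesColimitsOfShape (Discrete ι) G)
    (φ ψ : (tensorLeft (ModuleCat.of R A) ⋙ forget₂ (ModuleCat R) AddCommGrpCat) ⟶ G)
    (h : φ.app (ModuleCat.of R R) = ψ.app (ModuleCat.of R R)) :
    φ = ψ := by
  ext M x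
  show φ.app M x = ψ.app M x
  induction x using TensorProduct.induction_on with
  | zero => simp [map_zero]
  | tmul a m =>
    let f : ModuleCat.of R R ⟶ M := ModuleCat.ofHom (LinearMap.toSpanSingleton R _ m)
    have hφ := congrArg (fun g => g (a ⊗ₜ[R] (1:R))) (φ.naturality f)
    have hψ := congrArg (fun g => g (a ⊗ₜ[R] (1:R))) (ψ.naturality f)
    simp at hφ hψ
    erw [ModuleCat.MonoidalCategory.whiskerLeft_apply] at hφ hψ
    have hf : f (1:R) = m := one_smul R m
    rw [hf, h] at hφ
    rw [hf] at hψ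
    exact hφ.trans hψ.symm
  | add x y hx hy => simp only [map_add, hx, hy]
end

section
/- Let R be a commutative ring, f : A → B a homomorphism of R-modules, and D := im f, with m : D ↪ B the inclusion. Let M be an R-module and π : P ↠ M an epimorphism with P projective. Then the cokernel of the homomorphism ker(f ⊗ id_P : A ⊗_R P → B ⊗_R P) → ker(f ⊗ id_M : A ⊗_R M → B ⊗_R M) induced by id_A ⊗ π is isomorphic to ker(m ⊗ id_M : D ⊗_R M → B ⊗_R M). -/
open TensorProduct

/-- Auxiliary generic form of the first isomorphism theorem. -/
lemma aux_quot_equiv_of_surjective {R X Y : Type} [CommRing R]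
    [AddCommGroup X] [Module R X] [AddCommGroup Y] [Module R Y]
    (φ : X →ₗ[R] Y) (hs : Function.Surjective φ) (S : Submodule R X)
    (hS : S = LinearMap.ker φ) : Nonempty ((X ⧸ S) ≃+ Y) := by
  subst hS
  exact ⟨(φ.quotKerEquivOfSurjective hs).toAddEquiv⟩

set_option maxHeartbeats 1000000 in
/-- Let `R` be a commutative ring, `f : A → B` a homomorphism of `R`-modules, `D := im f`
with inclusion `m : D ↪ B`, and `π : P ↠ M` an epimorphism with `P` projective.  The
cokernel of the map `ker(f ⊗ id_P) → ker(f ⊗ id_M)` induced by `id_A ⊗ π` is isomorphic to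
`ker(m ⊗ id_M : D ⊗ M → B ⊗ M)`.  (This computes the quot-stabilization of the
tensor-copresented functor `ker(A ⊗ − → B ⊗ −)`.) -/
theorem quot_stabilization_of_tensor_copresented
    {R : Type} [CommRing R]
    {A B : Type} [AddCommGroup A] [Module R A] [AddCommGroup B] [Module R B]
    (f : A →ₗ[R] B)
    {M P : Type} [AddCommGroup M] [Module R M] [AddCommGroup P] [Module R P]
    [Module.Projective R P] (π : P →ₗ[R] M) (hπ : Function.Surjective π)
    (κ : LinearMap.ker (LinearMap.rTensor P f) →ₗ[R] LinearMap.ker (LinearMap.rTensor M f))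
    (hκ : ∀ x : LinearMap.ker (LinearMap.rTensor P f),
      (κ x : A ⊗[R] M) = LinearMap.lTensor A π (x : A ⊗[R] P)) :
    Nonempty ((LinearMap.ker (LinearMap.rTensor M f) ⧸ LinearMap.range κ) ≃+
      LinearMap.ker (LinearMap.rTensor M (LinearMap.range f).subtype)) := by
  set D := LinearMap.range f
  set p : A →ₗ[R] D := f.rangeRestrict
  set m : D →ₗ[R] B := D.subtype
  have hmp : m.comp p = f := rfl
  have hpsurj : Function.Surjective p := f.surjective_rangeRestrict
  -- factorization of rTensor M f
  have hfac : ∀ (N : Type) [AddCommGroup N] [Module R N] (x : A ⊗[R] N),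
      LinearMap.rTensor N f x = LinearMap.rTensor N m (LinearMap.rTensor N p x) := by
    intro N _ _ x
    rw [← LinearMap.comp_apply, ← LinearMap.rTensor_comp, hmp]
  -- the map φ : ker(f ⊗ M) → ker(m ⊗ M) induced by p ⊗ M
  have hmem : ∀ x ∈ LinearMap.ker (LinearMap.rTensor M f),
      LinearMap.rTensor M p x ∈ LinearMap.ker (LinearMap.rTensor M m) := by
    intro x hx
    rw [LinearMap.mem_ker, ← hfac]
    exact hx
  set φ : LinearMap.ker (LinearMap.rTensor M f) →ₗ[R] LinearMap.ker (LinearMap.rTensor M m) :=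
    (LinearMap.rTensor M p).restrict hmem
  -- φ is surjective
  have hφsurj : Function.Surjective φ := by
    rintro ⟨y, hy⟩
    obtain ⟨x, hx⟩ := LinearMap.rTensor_surjective (Q := M) (g := p) hpsurj y
    have hxker : x ∈ LinearMap.ker (LinearMap.rTensor M f) := by
      rw [LinearMap.mem_ker, hfac, hx]
      exact hy
    exact ⟨⟨x, hxker⟩, Subtype.ext hx⟩
  -- ker(f ⊗ P) = ker(p ⊗ P) since P is flat and m injective
  have hkerP : ∀ x : A ⊗[R] P, LinearMap.rTensor P f x = 0 ↔ LinearMap.rTensor P p x = 0 := by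
    intro x
    rw [hfac]
    constructor
    · intro h
      exact Module.Flat.rTensor_preserves_injective_linearMap (M := P) m
        D.injective_subtype (by simpa using h)
    · intro h; rw [h, map_zero]
  -- exactness: ker(p⊗N) = range ((ker p).subtype ⊗ N)
  have hexact : ∀ (N : Type) [AddCommGroup N] [Module R N],
      Function.Exact (LinearMap.rTensor N (LinearMap.ker p).subtype) (LinearMap.rTensor N p) :=
    fun N _ _ => rTensor_exact N p.exact_subtype_ker_map hpsurj
  -- range κ = ker φ
  have hrange : LinearMap.range κ = LinearMap.ker φ := by
    apply le_antisymm
    · rintro _ ⟨x, rfl⟩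
      have hx := x.2
      rw [LinearMap.mem_ker] at hx
      have hxp : LinearMap.rTensor P p (x : A ⊗[R] P) = 0 := (hkerP _).mp hx
      rw [LinearMap.mem_ker]
      apply Subtype.ext
      show LinearMap.rTensor M p ((κ x : A ⊗[R] M)) = 0
      rw [hκ x, ← LinearMap.comp_apply, LinearMap.rTensor_comp_lTensor,
        ← LinearMap.lTensor_comp_rTensor, LinearMap.comp_apply, hxp, map_zero]
    · rintro ⟨x, hx⟩ hker
      rw [LinearMap.mem_ker] at hker
      have hxp : LinearMap.rTensor M p x = 0 := congrArg Subtype.val hker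
      obtain ⟨z, hz⟩ := ((hexact M) x).mp hxp
      obtain ⟨w, hw⟩ := LinearMap.lTensor_surjective (LinearMap.ker p : Submodule R A) hπ z
      set x' : A ⊗[R] P := LinearMap.rTensor P (LinearMap.ker p).subtype w
      have hx'ker : x' ∈ LinearMap.ker (LinearMap.rTensor P f) := by
        rw [LinearMap.mem_ker, (hkerP x')]
        exact ((hexact P) x').mpr ⟨w, rfl⟩
      refine ⟨⟨x', hx'ker⟩, Subtype.ext ?_⟩
      show (κ ⟨x', hx'ker⟩ : A ⊗[R] M) = x
      rw [hκ, ← hz, ← hw]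
      show (LinearMap.lTensor A π) ((LinearMap.rTensor P (LinearMap.ker p).subtype) w)
        = (LinearMap.rTensor M (LinearMap.ker p).subtype) ((LinearMap.lTensor _ π) w)
      rw [← LinearMap.comp_apply, ← LinearMap.comp_apply,
        LinearMap.lTensor_comp_rTensor, LinearMap.rTensor_comp_lTensor]
  exact aux_quot_equiv_of_surjective (R := R) (X := LinearMap.ker (LinearMap.rTensor M f))
    (Y := LinearMap.ker (LinearMap.rTensor M m)) φ hφsurj (LinearMap.range κ) hrange
end

section
/- Let 𝓑 and 𝓒 be abelian categories, F : 𝓑 ⥤ 𝓒 a functor with right adjoint G : 𝓒 ⥤ 𝓑, and J an injective object of 𝓒. Let ι : B ↪ I be a monomorphism in 𝓑 with I injective. Then there is an isomorphism of abelian groups Hom_𝓒(ker(F(ι)), J) ≅ coker( Hom_𝓑(I, G(J)) → Hom_𝓑(B, G(J)) ), where the map on Hom-groups is precomposition with ι. -/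
open CategoryTheory Limits

/-- Let `𝓑`, `𝓒` be abelian categories, `F : 𝓑 ⥤ 𝓒` a functor with right adjoint `G`,
`J` an injective object of `𝓒`, and `ι : B ↪ I` a monomorphism in `𝓑` with `I` injective.
Then `Hom_𝓒(ker F(ι), J)` is isomorphic to the cokernel of precomposition with `ι`,
`Hom_𝓑(I, G(J)) → Hom_𝓑(B, G(J))`, i.e. to the stable Hom group modulo injectives. -/
theorem hom_substabilization_iso_stable_hom
    {𝓑 : Type*} [Category 𝓑] [Abelian 𝓑] {𝓒 : Type*} [Category 𝓒] [Abelian 𝓒]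
    (F : 𝓑 ⥤ 𝓒) (G : 𝓒 ⥤ 𝓑) (adj : F ⊣ G) (J : 𝓒) [Injective J]
    {B I : 𝓑} (ι : B ⟶ I) [Mono ι] [Injective I] :
    Nonempty ((kernel (F.map ι) ⟶ J) ≃+
      ((B ⟶ G.obj J) ⧸ AddMonoidHom.range
        (AddMonoidHom.mk' (fun g : I ⟶ G.obj J => ι ≫ g)
          (fun g₁ g₂ => Preadditive.comp_add _ _ _ ι g₁ g₂)))) := by
  have hRA : G.IsRightAdjoint := ⟨F, ⟨adj⟩⟩
  have hPL : PreservesLimitsOfSize.{0,0} G := adj.rightAdjoint_preservesLimits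
  have hGadd : G.Additive := Functor.additive_of_preserves_binary_products G
  -- the precomposition map Φ : (F B ⟶ J) →+ (ker F ι ⟶ J)
  set Φ : (F.obj B ⟶ J) →+ (kernel (F.map ι) ⟶ J) :=
    AddMonoidHom.mk' (fun f => kernel.ι (F.map ι) ≫ f)
      (fun f₁ f₂ => Preadditive.comp_add _ _ _ _ f₁ f₂) with hΦ
  -- Φ is surjective since J is injective and kernel.ι is mono
  have hsurj : Function.Surjective Φ := by
    intro h
    exact ⟨Injective.factorThru h (kernel.ι (F.map ι)),
      Injective.comp_factorThru h (kernel.ι (F.map ι))⟩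
  -- the precomposition map Ψ : (F I ⟶ J) →+ (F B ⟶ J)
  set Ψ : (F.obj I ⟶ J) →+ (F.obj B ⟶ J) :=
    AddMonoidHom.mk' (fun g => F.map ι ≫ g)
      (fun g₁ g₂ => Preadditive.comp_add _ _ _ _ g₁ g₂) with hΨ
  -- ker Φ = range Ψ
  have hker : Φ.ker = Ψ.range := by
    ext f
    constructor
    · intro hf
      have hf0 : kernel.ι (F.map ι) ≫ f = 0 := hf
      set f' : Abelian.coimage (F.map ι) ⟶ J := cokernel.desc _ f hf0 with hf'
      set c := Abelian.coimageImageComparison (F.map ι) with hc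
      refine ⟨Injective.factorThru (inv c ≫ f') (Abelian.image.ι (F.map ι)), ?_⟩
      set t := Injective.factorThru (inv c ≫ f') (Abelian.image.ι (F.map ι)) with ht
      have h2 : Abelian.image.ι (F.map ι) ≫ t = inv c ≫ f' :=
        Injective.comp_factorThru _ _
      show F.map ι ≫ t = f
      calc F.map ι ≫ t
          = (Abelian.coimage.π (F.map ι) ≫ c ≫ Abelian.image.ι (F.map ι)) ≫ t := by
            rw [Abelian.coimage_image_factorisation]
        _ = Abelian.coimage.π (F.map ι) ≫ c ≫ inv c ≫ f' := by
            rw [Category.assoc, Category.assoc, h2]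
        _ = f := by simp [f']
    · rintro ⟨g, rfl⟩
      show kernel.ι (F.map ι) ≫ F.map ι ≫ g = 0
      rw [kernel.condition_assoc, zero_comp]
  -- first equivalence: (F B ⟶ J) ⧸ range Ψ ≃+ (ker F ι ⟶ J)
  have e1 : ((F.obj B ⟶ J) ⧸ Ψ.range) ≃+ (kernel (F.map ι) ⟶ J) :=
    (QuotientAddGroup.quotientAddEquivOfEq hker.symm).trans
      (QuotientAddGroup.quotientKerEquivOfSurjective Φ hsurj)
  -- the adjunction hom-equivalence, as an additive equivalence
  set eB : (F.obj B ⟶ J) ≃+ (B ⟶ G.obj J) :=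
    AddEquiv.mk' (adj.homEquiv B J) (by
      intro f g
      simp only [Adjunction.homEquiv_unit, Functor.map_add, Preadditive.comp_add]) with heB
  -- it maps range Ψ onto the range of (ι ≫ ·)
  have hmap : Ψ.range.map eB.toAddMonoidHom =
      AddMonoidHom.range (AddMonoidHom.mk' (fun g : I ⟶ G.obj J => ι ≫ g)
        (fun g₁ g₂ => Preadditive.comp_add _ _ _ ι g₁ g₂)) := by
    ext x
    simp only [AddSubgroup.mem_map, AddMonoidHom.mem_range]
    constructor
    · rintro ⟨y, ⟨g, rfl⟩, rfl⟩
      refine ⟨adj.homEquiv I J g, ?_⟩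
      show ι ≫ adj.homEquiv I J g = adj.homEquiv B J (F.map ι ≫ g)
      exact (adj.homEquiv_naturality_left ι g).symm
    · rintro ⟨g, rfl⟩
      refine ⟨F.map ι ≫ (adj.homEquiv I J).symm g, ⟨(adj.homEquiv I J).symm g, rfl⟩, ?_⟩
      show adj.homEquiv B J (F.map ι ≫ (adj.homEquiv I J).symm g) = ι ≫ g
      rw [adj.homEquiv_naturality_left]
      rw [Equiv.apply_symm_apply]
  exact ⟨e1.symm.trans (QuotientAddGroup.congr Ψ.range _ eB hmap)⟩
end

section
/- Let 𝓒 and 𝓓 be abelian categories, F : 𝓒 ⥤ 𝓓 a functor with right adjoint G : 𝓓 ⥤ 𝓒, and Q a projective object of 𝓒. Let π : P ↠ A be an epimorphism in 𝓓 with P projective. Then there is an isomorphism of abelian groups Hom_𝓒(Q, coker(G(π))) ≅ coker( Hom_𝓓(F(Q), P) → Hom_𝓓(F(Q), A) ), where the map on Hom-groups is postcomposition with π. -/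
open CategoryTheory Limits

/-- Let `𝓒`, `𝓓` be abelian categories, `F : 𝓒 ⥤ 𝓓` a functor with right adjoint `G`,
`Q` a projective object of `𝓒`, and `π : P ↠ A` an epimorphism in `𝓓` with `P` projective.
Then `Hom_𝓒(Q, coker G(π))` is isomorphic to the cokernel of postcomposition with `π`,
`Hom_𝓓(F(Q), P) → Hom_𝓓(F(Q), A)`, i.e. to the stable Hom group modulo projectives. -/
theorem hom_quotstabilization_iso_stable_hom
    {𝓒 : Type*} [Category 𝓒] [Abelian 𝓒] {𝓓 : Type*} [Category 𝓓] [Abelian 𝓓]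
    (F : 𝓒 ⥤ 𝓓) (G : 𝓓 ⥤ 𝓒) (adj : F ⊣ G) (Q : 𝓒) [Projective Q]
    {P A : 𝓓} (π : P ⟶ A) [Epi π] [Projective P] :
    Nonempty ((Q ⟶ cokernel (G.map π)) ≃+
      ((F.obj Q ⟶ A) ⧸ AddMonoidHom.range
        (AddMonoidHom.mk' (fun g : F.obj Q ⟶ P => g ≫ π)
          (fun g₁ g₂ => Preadditive.add_comp _ _ _ g₁ g₂ π)))) := by
  have : G.IsRightAdjoint := ⟨F, ⟨adj⟩⟩
  have hlim : PreservesLimitsOfSize.{0, 0} G := adj.rightAdjoint_preservesLimits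
  have hGadd : G.Additive := G.additive_of_preserves_binary_products
  set ψ : (F.obj Q ⟶ P) →+ (F.obj Q ⟶ A) :=
    AddMonoidHom.mk' (fun g : F.obj Q ⟶ P => g ≫ π)
      (fun g₁ g₂ => Preadditive.add_comp _ _ _ g₁ g₂ π) with hψ
  let φ : (F.obj Q ⟶ A) →+ (Q ⟶ cokernel (G.map π)) :=
    AddMonoidHom.mk' (fun g => (adj.homEquiv Q A g) ≫ cokernel.π (G.map π)) (by
      intro g₁ g₂
      simp [Adjunction.homEquiv_apply, Functor.map_add, Preadditive.comp_add,
        Preadditive.add_comp])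
  have hsurj : Function.Surjective φ := by
    intro f
    obtain ⟨h, hh⟩ : ∃ h : Q ⟶ G.obj A, h ≫ cokernel.π (G.map π) = f :=
      ⟨Projective.factorThru f (cokernel.π (G.map π)), Projective.factorThru_comp _ _⟩
    exact ⟨(adj.homEquiv Q A).symm h, by simp [φ, hh]⟩
  have hker : φ.ker = ψ.range := by
    ext g
    constructor
    · intro hg
      have hg' : (adj.homEquiv Q A g) ≫ cokernel.π (G.map π) = 0 := hg
      -- factor through the image of G.map π
      let f' : Q ⟶ Abelian.image (G.map π) := kernel.lift _ _ hg'
      let h : Q ⟶ G.obj P := Projective.factorThru f' (Abelian.factorThruImage (G.map π))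
      have hfac : h ≫ G.map π = adj.homEquiv Q A g := by
        have : h ≫ Abelian.factorThruImage (G.map π) = f' := Projective.factorThru_comp _ _
        rw [← Abelian.image.fac (G.map π), ← Category.assoc, this]
        simp [f']
      refine ⟨(adj.homEquiv Q P).symm h, ?_⟩
      apply (adj.homEquiv Q A).injective
      rw [hψ]
      simp only [AddMonoidHom.mk'_apply]
      rw [Adjunction.homEquiv_naturality_right]
      simp [hfac]
    · rintro ⟨g', rfl⟩
      show (adj.homEquiv Q A (g' ≫ π)) ≫ cokernel.π (G.map π) = 0
      rw [Adjunction.homEquiv_naturality_right, Category.assoc, cokernel.condition,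
        comp_zero]
  exact ⟨((QuotientAddGroup.quotientKerEquivOfSurjective φ hsurj).symm.trans
    (QuotientAddGroup.quotientAddEquivOfEq hker))⟩
end
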